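/- Let p and q be real numbers with p > 0, q > 0 and p ≠ q, and let n, κ be natural numbers. Then the κ-th order (p,q)-factorial of −n satisfies [−n]_{κ,p,q} = (−1)^κ · (pq)^{−nκ−κ(κ−1)/2} · [n+κ−1]_{κ,p,q}. -/

import Mathlib

/-- The (p,q)-deformed number `[x]_{p,q} = (p^x - q^x)/(p - q)` (real powers). -/
noncomputable def pqNum (p q x : ℝ) : ℝ := (p ^ x - q ^ x) / (p - q)

/-- The κ-th order (p,q)-factorial `[x]_{κ,p,q} = ∏_{v=0}^{κ-1} [x-v]_{p,q}`. -/
noncomputable def pqFacOrd (p q x : ℝ) (j : ℕ) : ℝ := ∏ v ∈ Finset.range j, pqNum p q (x - (v : ℝ))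

lemma pqNum_neg (p q : ℝ) (hp : 0 < p) (hq : 0 < q) (x : ℝ) :
    pqNum p q (-x) = -((p * q) ^ (-x)) * pqNum p q x := by
  unfold pqNum
  rw [Real.rpow_neg hp.le, Real.rpow_neg hq.le, Real.rpow_neg (mul_pos hp hq).le,
    Real.mul_rpow hp.le hq.le]
  have hpx : (p : ℝ) ^ x ≠ 0 := (Real.rpow_pos_of_pos hp x).ne'
  have hqx : (q : ℝ) ^ x ≠ 0 := (Real.rpow_pos_of_pos hq x).ne'
  field_simp
  ring

lemma prod_rpow_sum (x : ℝ) (hx : 0 < x) (s : Finset ℕ) (f : ℕ → ℝ) :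
    ∏ v ∈ s, x ^ (f v) = x ^ (∑ v ∈ s, f v) := by
  induction s using Finset.cons_induction with
  | empty => simp
  | cons a s ha ih => rw [Finset.prod_cons, Finset.sum_cons, ih, ← Real.rpow_add hx]

/-- `[-n]_{κ,p,q} = (-1)^κ (pq)^{-nκ-κ(κ-1)/2} [n+κ-1]_{κ,p,q}`. -/
theorem pqFacOrd_neg (p q : ℝ) (hp : 0 < p) (hq : 0 < q) (hpq : p ≠ q) (n κ : ℕ) :
    pqFacOrd p q (-(n : ℝ)) κ =
      (-1 : ℝ) ^ κ * (p * q) ^ (-((n : ℝ) * (κ : ℝ)) - (κ : ℝ) * ((κ : ℝ) - 1) / 2)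
        * pqFacOrd p q ((n : ℝ) + (κ : ℝ) - 1) κ := by
  unfold pqFacOrd
  have hrhs : ∏ v ∈ Finset.range κ, pqNum p q ((n : ℝ) + (κ : ℝ) - 1 - (v : ℝ))
      = ∏ v ∈ Finset.range κ, pqNum p q ((n : ℝ) + (v : ℝ)) := by
    rw [← Finset.prod_range_reflect (fun v => pqNum p q ((n : ℝ) + (v : ℝ))) κ]
    refine Finset.prod_congr rfl fun v hv => ?_
    have hv' : v < κ := Finset.mem_range.mp hv
    have : ((κ - 1 - v : ℕ) : ℝ) = (κ : ℝ) - 1 - v := by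
      have h1 : v ≤ κ - 1 := Nat.le_sub_one_of_lt hv'
      have h2 : 1 ≤ κ := Nat.one_le_of_lt (Nat.lt_of_le_of_lt (Nat.zero_le v) hv')
      push_cast [Nat.cast_sub h1, Nat.cast_sub h2]
      ring
    rw [this]
    ring_nf
  rw [hrhs]
  have hlhs : ∀ v : ℕ, pqNum p q (-(n : ℝ) - (v : ℝ))
      = (-1 : ℝ) * (p * q) ^ (-((n : ℝ) + (v : ℝ))) * pqNum p q ((n : ℝ) + (v : ℝ)) := by
    intro v
    have := pqNum_neg p q hp hq ((n : ℝ) + (v : ℝ))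
    rw [show -((n : ℝ) + (v : ℝ)) = -(n : ℝ) - (v : ℝ) by ring] at this
    rw [this]; ring
  simp only [hlhs]
  rw [Finset.prod_mul_distrib, Finset.prod_mul_distrib, Finset.prod_const,
    prod_rpow_sum _ (mul_pos hp hq)]
  have hsum : ∑ v ∈ Finset.range κ, (-((n : ℝ) + (v : ℝ)))
      = -((n : ℝ) * (κ : ℝ)) - (κ : ℝ) * ((κ : ℝ) - 1) / 2 := by
    have hg : (∑ v ∈ Finset.range κ, (v : ℝ)) = (κ : ℝ) * ((κ : ℝ) - 1) / 2 := by
      have := Finset.sum_range_id_mul_two κ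
      have h2 : ((∑ i ∈ Finset.range κ, i) * 2 : ℕ) = (κ * (κ - 1) : ℕ) := this
      rcases Nat.eq_zero_or_pos κ with h | h
      · simp [h]
      · have hc : ((κ - 1 : ℕ) : ℝ) = (κ : ℝ) - 1 := by
          push_cast [Nat.cast_sub h]; ring
        have := congrArg (Nat.cast : ℕ → ℝ) h2
        push_cast at this
        rw [hc] at this
        linarith
    rw [Finset.sum_neg_distrib, Finset.sum_add_distrib, Finset.sum_const, hg]
    push_cast [Finset.card_range]
    ring
  rw [hsum]
  ring_nf
  simp [mul_comm, mul_assoc, mul_left_comm]
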